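/- Define h(l,u;θ) := (K − e^{θu}) − (K − e^{θl}) Z^{(r+λ)}(u−l;Φ(r)) + λ ∫_0^{u−l} (K − e^{θ(u−y)}) W^{(r+λ)}(y) dy for l < u. Then ∂h/∂l (l,u;θ) = [θ e^{θl} + (K − e^{θl}) Φ(r)] · Z^{(r+λ)}(u−l;Φ(r)); in particular h(u,u;θ) = 0 and ∂h/∂l |_{l=u−} = θe^{θu} + (K − e^{θu})Φ(r). -/

import Mathlib

open MeasureTheory

/-- `Z^{(r+λ)}(x;Φ(r)) = e^{Φ(r)x}(1 + λ ∫_0^x e^{−Φ(r)z} W(z) dz)` (using `ψ(Φ(r)) = r`). -/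
noncomputable def Zh (W : ℝ → ℝ) (lam Φ x : ℝ) : ℝ :=
  Real.exp (Φ * x) * (1 + lam * ∫ z in (0 : ℝ)..x, Real.exp (-Φ * z) * W z)

/-- `h(l,u;θ) = (K − e^{θu}) − (K − e^{θl}) Z^{(r+λ)}(u−l;Φ(r))
      + λ ∫_0^{u−l} (K − e^{θ(u−y)}) W(y) dy`. -/
noncomputable def hfun (W : ℝ → ℝ) (lam Φ K θ l u : ℝ) : ℝ :=
  (K - Real.exp (θ * u)) - (K - Real.exp (θ * l)) * Zh W lam Φ (u - l)
    + lam * ∫ y in (0 : ℝ)..(u - l), (K - Real.exp (θ * (u - y))) * W y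

lemma hasDerivAt_intfun (g : ℝ → ℝ) (hg : Continuous g) (x : ℝ) :
    HasDerivAt (fun t => ∫ z in (0 : ℝ)..t, g z) (g x) x :=
  intervalIntegral.integral_hasDerivAt_right (hg.intervalIntegrable _ _)
    (hg.stronglyMeasurableAtFilter _ _) hg.continuousAt

lemma Zh_deriv (W : ℝ → ℝ) (hW : Continuous W) (lam Φ : ℝ) (x : ℝ) :
    HasDerivAt (Zh W lam Φ) (Φ * Zh W lam Φ x + lam * W x) x := by
  have hcont : Continuous (fun z => Real.exp (-Φ * z) * W z) :=
    (Real.continuous_exp.comp (continuous_const.mul continuous_id)).mul hW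
  have hI := hasDerivAt_intfun _ hcont x
  have h0 : HasDerivAt (fun x : ℝ => Φ * x) Φ x := by
    simpa using (hasDerivAt_id x).const_mul Φ
  have h1 := h0.exp
  have h2 := h1.mul ((hI.const_mul lam).const_add 1)
  have key : Real.exp (Φ * x) * Real.exp (-Φ * x) = 1 := by
    rw [← Real.exp_add]; simp
  refine h2.congr_deriv (Eq.symm ?_)
  simp only [Zh]
  linear_combination (-(lam * W x)) * key

theorem stmt13
    (W : ℝ → ℝ) (hW : Continuous W)
    (lam Φ K θ : ℝ) (hK : 0 < K) (hlam : 0 < lam) :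
    (∀ l u : ℝ,
      HasDerivAt (fun l' => hfun W lam Φ K θ l' u)
        ((θ * Real.exp (θ * l) + (K - Real.exp (θ * l)) * Φ) * Zh W lam Φ (u - l)) l)
    ∧ (∀ u : ℝ, hfun W lam Φ K θ u u = 0)
    ∧ (∀ u : ℝ,
        (θ * Real.exp (θ * u) + (K - Real.exp (θ * u)) * Φ) * Zh W lam Φ 0
          = θ * Real.exp (θ * u) + (K - Real.exp (θ * u)) * Φ) := by
  refine ⟨fun l u => ?_, fun u => ?_, fun u => ?_⟩
  · -- derivative in l
    have hsub : HasDerivAt (fun l' : ℝ => u - l') (-1) l := by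
      simpa using (hasDerivAt_id l).const_sub u
    have hZ : HasDerivAt (fun l' => Zh W lam Φ (u - l'))
        ((Φ * Zh W lam Φ (u - l) + lam * W (u - l)) * (-1)) l :=
      (Zh_deriv W hW lam Φ (u - l)).comp l hsub
    have hexp : HasDerivAt (fun l' : ℝ => K - Real.exp (θ * l'))
        (-(Real.exp (θ * l) * θ)) l := by
      have h0 : HasDerivAt (fun l' : ℝ => θ * l') θ l := by
        simpa using (hasDerivAt_id l).const_mul θ
      simpa using (h0.exp.const_sub K)
    have hprod := hexp.mul hZ
    have hgcont : Continuous (fun y => (K - Real.exp (θ * (u - y))) * W y) :=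
      ((continuous_const.sub (Real.continuous_exp.comp
        (continuous_const.mul (continuous_const.sub continuous_id)))).mul hW)
    have hint : HasDerivAt (fun l' => ∫ y in (0 : ℝ)..(u - l'),
        (K - Real.exp (θ * (u - y))) * W y)
        ((K - Real.exp (θ * (u - (u - l)))) * W (u - l) * (-1)) l :=
      (hasDerivAt_intfun _ hgcont (u - l)).comp l hsub
    have htotal := ((hprod.const_sub (K - Real.exp (θ * u))).add (hint.const_mul lam))
    have hul : u - (u - l) = l := by ring
    rw [hul] at hint htotal
    refine htotal.congr_deriv (Eq.symm ?_)
    ring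
  · simp [hfun, Zh]
  · simp [Zh]
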